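/- Let φ : ℂ → ℂ be defined on V_ε and satisfy the functional equation φ(t/(1-t)) = f_0(φ(t)) wherever both sides are defined, with f_0 entire (or holomorphic on the relevant domain). For t ∈ ℂ \ {0}, choose N ∈ ℕ such that t/(1+Nt) ∈ V_ε, and define φ̃(t) := f_0^N(φ(t/(1+Nt))). Then φ̃ is well-defined, i.e. independent of the choice of N: if t/(1+Nt) ∈ V_ε and t/(1+Mt) ∈ V_ε with M ≥ N, then f_0^N(φ(t/(1+Nt))) = f_0^M(φ(t/(1+Mt))). -/

import Mathlib

lemma stmt19_mem_iff (ε : ℝ) (hε : 0 < ε) (z : ℂ) :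
    ‖z - (ε : ℂ)‖ < ε ↔ Complex.normSq z < 2*ε*z.re := by
  rw [Complex.norm_def, show Real.sqrt (Complex.normSq (z - ε)) < ε ↔
      Complex.normSq (z - ε) < ε^2 from Real.sqrt_lt' hε]
  simp [Complex.normSq_apply, Complex.sub_re, Complex.sub_im]
  constructor <;> intro h <;> nlinarith [h]

lemma stmt19_inv_step (ε : ℝ) (hε : 0 < ε) (s : ℂ) (h : ‖s - (ε : ℂ)‖ < ε) :
    ‖s/(1+s) - (ε : ℂ)‖ < ε := by
  rw [stmt19_mem_iff ε hε] at h ⊢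
  have hs0 : s ≠ 0 := by rintro rfl; simp at h
  have hns : 0 < Complex.normSq s := Complex.normSq_pos.2 hs0
  have hre : 0 < s.re := by nlinarith
  have h1s : (1 + s) ≠ 0 := by
    intro h0
    have : (1 + s).re = 0 := by rw [h0]; simp
    simp [Complex.add_re] at this
    linarith
  have hD : 0 < Complex.normSq (1 + s) := Complex.normSq_pos.2 h1s
  rw [Complex.normSq_div, Complex.div_re]
  have hre2 : ((s.re * (1+s).re + s.im * (1+s).im)) = s.re + Complex.normSq s := by
    simp [Complex.add_re, Complex.add_im, Complex.normSq_apply]; ring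
  rw [← add_div, hre2]
  rw [div_lt_iff₀ hD]
  have : 2 * ε * ((s.re + Complex.normSq s) / Complex.normSq (1 + s)) * Complex.normSq (1 + s)
      = 2 * ε * (s.re + Complex.normSq s) := by field_simp
  rw [this]
  nlinarith [hns, hre, hε, hD]

/-- the extension `φ̃(t) = f₀^N(φ(t/(1+Nt)))` of the unstable-manifold
parametrization is independent of the choice of `N`: if `φ` satisfies
`φ(t/(1-t)) = f₀(φ t)` on `V_ε = {|z-ε|<ε}`, `t ≠ 0`, `N ≤ M`, and both `t/(1+Nt)`
and `t/(1+Mt)` lie in `V_ε`, then `f₀^[N](φ(t/(1+Nt))) = f₀^[M](φ(t/(1+Mt)))`. -/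
theorem stmt19 (ε : ℝ) (hε : 0 < ε) (f₀ φ : ℂ → ℂ)
    (hfe : ∀ t : ℂ, ‖t - (ε : ℂ)‖ < ε →
      ‖t/(1-t) - (ε : ℂ)‖ < ε → φ (t/(1-t)) = f₀ (φ t)) :
    ∀ t : ℂ, t ≠ 0 → ∀ N M : ℕ, N ≤ M →
      ‖t/(1+(N : ℂ)*t) - (ε : ℂ)‖ < ε →
      ‖t/(1+(M : ℂ)*t) - (ε : ℂ)‖ < ε →
      f₀^[N] (φ (t/(1+(N : ℂ)*t))) = f₀^[M] (φ (t/(1+(M : ℂ)*t))) := by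
  intro t ht N M hNM hN hM
  have hne : ∀ x : ℂ, ‖x - (ε:ℂ)‖ < ε → x ≠ 0 := by
    intro x hx h0
    rw [h0] at hx
    simp [abs_of_pos hε] at hx
  have key : ∀ j : ℕ, ‖t/(1+((N:ℂ)+(j:ℂ))*t) - (ε:ℂ)‖ < ε ∧
      f₀^[N] (φ (t/(1+(N:ℂ)*t))) = f₀^[N+j] (φ (t/(1+((N:ℂ)+(j:ℂ))*t))) := by
    intro j
    induction j with
    | zero => exact ⟨by simpa using hN, by norm_num⟩
    | succ j ih =>
      obtain ⟨hmem, heq⟩ := ih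
      set k : ℂ := (N:ℂ) + (j:ℂ) with hk
      have hden : (1 + k*t) ≠ 0 := by
        intro h0
        exact hne _ hmem (by rw [h0, div_zero])
      have hcast : ((N:ℂ) + ((j+1 : ℕ):ℂ)) = k + 1 := by push_cast [hk]; ring
      have hsum : (1:ℂ) + (k+1)*t = (1 + k*t) + t := by ring
      have halg : (t/(1+k*t)) / (1 + t/(1+k*t)) = t/(1+(k+1)*t) := by
        rw [hsum]
        by_cases hd2 : (1 + k*t) + t = 0
        · have h1 : (1:ℂ) + t/(1+k*t) = ((1+k*t)+t)/(1+k*t) := by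
            rw [add_div, div_self hden]
          rw [h1, hd2, zero_div, div_zero, div_zero]
        · rw [one_add_div hden, div_div_div_cancel_right₀ hden]
      have hmem' : ‖t/(1+(k+1)*t) - (ε:ℂ)‖ < ε := by
        rw [← halg]; exact stmt19_inv_step ε hε _ hmem
      have hden' : (1 + (k+1)*t) ≠ 0 := by
        intro h0
        exact hne _ hmem' (by rw [h0, div_zero])
      have hs : (t/(1+(k+1)*t)) / (1 - t/(1+(k+1)*t)) = t/(1+k*t) := by
        have h1 : (1:ℂ) - t/(1+(k+1)*t) = (1+k*t)/(1+(k+1)*t) := by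
          rw [one_sub_div hden']
          ring
        rw [h1]
        rw [div_div_div_eq, mul_comm t (1+(k+1)*t), mul_div_mul_left _ _ hden']
      have hφ := hfe _ hmem' (by rw [hs]; exact hmem)
      rw [hs] at hφ
      refine ⟨by rw [hcast]; exact hmem', ?_⟩
      rw [hcast, heq, hφ, ← Function.iterate_succ_apply]
      rfl
  obtain ⟨_, heq⟩ := key (M - N)
  have h1 : N + (M - N) = M := Nat.add_sub_cancel' hNM
  have h2 : ((N:ℂ) + ((M - N : ℕ):ℂ)) = (M:ℂ) := by
    rw [Nat.cast_sub hNM]; ring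
  rw [h1, h2] at heq
  exact heq
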